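/- For σ ≥ 0, define g₀(n) = (1+σ)/n + σn + exp((1+σ)/2 − (1+σ)/(2n²) − σ ln n) and 𝔤₀(n) = n − exp((1+σ)/2 − (1+σ)/(2n²) − σ ln n). Then 𝔤₀(n) = 0 has unique solution n = 1 on (0,∞), 𝔤₀(n) > 0 for n ∈ (1,∞), and g₀'(n) = −((1+σ)/n³ − σ/n)·𝔤₀(n). -/

import Mathlib

open Real

private noncomputable def hfun : ℝ → ℝ := fun n => Real.log n - 1/2 + 1/(2*n^2)

private lemma hfun_deriv {x : ℝ} (hx : 0 < x) :
    HasDerivAt hfun ((x^2 - 1)/x^3) x := by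
  have h2 : HasDerivAt (fun n : ℝ => 2*n^2) (2*(2*x)) x := by
    simpa using ((hasDerivAt_pow 2 x).const_mul 2)
  have hne : 2*x^2 ≠ 0 := by positivity
  have h3 : HasDerivAt (fun n : ℝ => (2*n^2)⁻¹) (-(2*(2*x))/(2*x^2)^2) x := h2.inv hne
  have h1 : HasDerivAt Real.log x⁻¹ x := Real.hasDerivAt_log hx.ne'
  have := ((h1.sub_const (1/2)).add h3)
  have heq : x⁻¹ + -(2*(2*x))/(2*x^2)^2 = (x^2-1)/x^3 := by
    field_simp; ring
  rw [heq] at this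
  have hf : hfun = ((fun x => Real.log x - 1/2) + fun n : ℝ => (2*n^2)⁻¹) := by
    ext n
    simp [hfun, one_div]
  rw [hf]; exact this

private lemma hfun_pos {x : ℝ} (hx : 0 < x) (hx1 : x ≠ 1) : 0 < hfun x := by
  have h1 : hfun 1 = 0 := by norm_num [hfun]
  rcases lt_or_gt_of_ne hx1 with h | h
  · have hanti : StrictAntiOn hfun (Set.Ioc (0:ℝ) 1) := by
      apply strictAntiOn_of_deriv_neg (convex_Ioc 0 1)
      · intro y hy
        exact ((hfun_deriv hy.1).continuousAt).continuousWithinAt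
      · intro y hy
        rw [interior_Ioc] at hy
        rw [(hfun_deriv (hy.1)).deriv]
        apply div_neg_of_neg_of_pos
        · nlinarith [hy.1, hy.2]
        · exact pow_pos hy.1 3
    have := hanti ⟨hx, h.le⟩ ⟨one_pos, le_refl 1⟩ h
    rw [h1] at this; exact this
  · have hmono : StrictMonoOn hfun (Set.Ici (1:ℝ)) := by
      apply strictMonoOn_of_deriv_pos (convex_Ici 1)
      · intro y hy
        exact ((hfun_deriv (lt_of_lt_of_le one_pos hy)).continuousAt).continuousWithinAt
      · intro y hy
        rw [interior_Ici] at hy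
        have hy1 : (1:ℝ) < y := hy
        rw [(hfun_deriv (lt_trans one_pos hy1)).deriv]
        apply div_pos
        · nlinarith
        · exact pow_pos (lt_trans one_pos hy1) 3
    have := hmono (Set.self_mem_Ici) (Set.mem_Ici.mpr h.le) h
    rw [h1] at this; exact this

theorem stmt_13 (σ : ℝ) (hσ : 0 ≤ σ)
    (g₀ 𝔤₀ : ℝ → ℝ)
    (hg₀ : ∀ n : ℝ, 0 < n →
      g₀ n = (1 + σ) / n + σ * n
        + Real.exp ((1 + σ) / 2 - (1 + σ) / (2 * n ^ 2) - σ * Real.log n))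
    (h𝔤₀ : ∀ n : ℝ, 0 < n →
      𝔤₀ n = n - Real.exp ((1 + σ) / 2 - (1 + σ) / (2 * n ^ 2) - σ * Real.log n)) :
    (∀ n : ℝ, 0 < n → (𝔤₀ n = 0 ↔ n = 1)) ∧
    (∀ n : ℝ, 1 < n → 0 < 𝔤₀ n) ∧
    (∀ n : ℝ, 0 < n →
      HasDerivAt g₀ (-((1 + σ) / n ^ 3 - σ / n) * 𝔤₀ n) n) := by
  have hσ1 : (0:ℝ) < 1 + σ := by linarith
  -- key: E n < log n iff hfun n > 0 ; E n = log n iff hfun n = 0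
  have key : ∀ n : ℝ, 0 < n →
      ((1 + σ) / 2 - (1 + σ) / (2 * n ^ 2) - σ * Real.log n) - Real.log n
        = -((1 + σ)) * hfun n := by
    intro n hn
    have hn2 : n^2 ≠ 0 := by positivity
    simp only [hfun]
    field_simp
    ring
  refine ⟨?_, ?_, ?_⟩
  · intro n hn
    rw [h𝔤₀ n hn, sub_eq_zero]
    constructor
    · intro h
      by_contra hne
      have hpos := hfun_pos hn hne
      have : ((1 + σ) / 2 - (1 + σ) / (2 * n ^ 2) - σ * Real.log n) - Real.log n < 0 := by
        have := key n hn
        nlinarith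
      have hlt : Real.exp ((1 + σ) / 2 - (1 + σ) / (2 * n ^ 2) - σ * Real.log n)
          < Real.exp (Real.log n) := Real.exp_lt_exp.mpr (by linarith)
      rw [Real.exp_log hn] at hlt
      linarith [h ▸ hlt]
    · intro h; subst h; norm_num
  · intro n hn
    have hn0 : (0:ℝ) < n := lt_trans one_pos hn
    rw [h𝔤₀ n hn0, sub_pos]
    have hpos := hfun_pos hn0 (ne_of_gt hn)
    have : ((1 + σ) / 2 - (1 + σ) / (2 * n ^ 2) - σ * Real.log n) - Real.log n < 0 := by
      have := key n hn0
      nlinarith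
    calc Real.exp ((1 + σ) / 2 - (1 + σ) / (2 * n ^ 2) - σ * Real.log n)
        < Real.exp (Real.log n) := Real.exp_lt_exp.mpr (by linarith)
      _ = n := Real.exp_log hn0
  · intro x hx
    set E : ℝ → ℝ := fun n => (1 + σ) / 2 - (1 + σ) / (2 * n ^ 2) - σ * Real.log n with hE
    have hne : 2*x^2 ≠ 0 := by positivity
    have h2 : HasDerivAt (fun n : ℝ => 2*n^2) (2*(2*x)) x := by
      simpa using ((hasDerivAt_pow 2 x).const_mul 2)
    have h3 : HasDerivAt (fun n : ℝ => (1+σ) * (2*n^2)⁻¹)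
        ((1+σ) * (-(2*(2*x))/(2*x^2)^2)) x := (h2.inv hne).const_mul (1+σ)
    have hlog : HasDerivAt (fun n : ℝ => σ * Real.log n) (σ * x⁻¹) x :=
      (Real.hasDerivAt_log hx.ne').const_mul σ
    have hEder : HasDerivAt E ((1+σ)/x^3 - σ/x) x := by
      have : HasDerivAt E
          (0 - (1+σ) * (-(2*(2*x))/(2*x^2)^2) - σ * x⁻¹) x := by
        apply HasDerivAt.sub _ hlog
        apply HasDerivAt.sub (hasDerivAt_const x _)
        have : (fun n : ℝ => (1 + σ) / (2 * n ^ 2)) = fun n => (1+σ) * (2*n^2)⁻¹ := by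
          ext n; rw [div_eq_mul_inv]
        rw [this]; exact h3
      convert this using 1
      field_simp; ring
    have hexp : HasDerivAt (fun n => Real.exp (E n))
        (Real.exp (E x) * ((1+σ)/x^3 - σ/x)) x := hEder.exp
    have hinv : HasDerivAt (fun n : ℝ => (1+σ)/n) (-(1+σ)/x^2) x := by
      have := (hasDerivAt_id x).inv hx.ne'
      have h' := this.const_mul (1+σ)
      simp only [Pi.inv_apply, id] at h'
      have heq : (fun n : ℝ => (1+σ) * n⁻¹) = fun n : ℝ => (1+σ)/n := by
        ext n; rw [div_eq_mul_inv]
      rw [heq] at h'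
      have e : -(1+σ)/x^2 = (1+σ)*(-1/x^2) := by ring
      rw [e]; exact h'
    have hlin : HasDerivAt (fun n : ℝ => σ * n) σ x := by
      simpa using (hasDerivAt_id x).const_mul σ
    have hF : HasDerivAt (fun n => (1+σ)/n + σ*n + Real.exp (E n))
        (-(1+σ)/x^2 + σ + Real.exp (E x) * ((1+σ)/x^3 - σ/x)) x :=
      (hinv.add hlin).add hexp
    have hg : HasDerivAt g₀
        (-(1+σ)/x^2 + σ + Real.exp (E x) * ((1+σ)/x^3 - σ/x)) x := by
      apply hF.congr_of_eventuallyEq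
      filter_upwards [eventually_gt_nhds hx] with y hy  -- wrong direction? need eventually y > 0
      exact hg₀ y hy
    convert hg using 1
    rw [h𝔤₀ x hx]
    simp only [hE]
    set c := Real.exp ((1 + σ) / 2 - (1 + σ) / (2 * x ^ 2) - σ * Real.log x) with hc
    have hx2 : x ≠ 0 := hx.ne'
    field_simp
    ring
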